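/- arXiv:0709.2672 — 3 statements merged into one kernel-verified Lean document; each statement's English description precedes it below -/
import Mathlib

section
/- Let p > 1 be real. Then L(Q^{(p+1)/2}) = −(1/4)·(p−1)(p+3)·Q^{(p+1)/2} on ℝ (so Q^{(p+1)/2} is an eigenfunction of L with eigenvalue −(1/4)(p−1)(p+3)), and L(Q') = 0 on ℝ. -/
open Real

/-- The soliton profile `Q` for general power `p`. -/
noncomputable def Qgen (p : ℝ) (x : ℝ) : ℝ :=
  ((p + 1) / (2 * Real.cosh ((p - 1) / 2 * x) ^ 2)) ^ (1 / (p - 1))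

/-- The linearized operator `L` around the soliton `Q`. -/
noncomputable def Lop (p : ℝ) (w : ℝ → ℝ) (x : ℝ) : ℝ :=
  -deriv (deriv w) x + w x - p * Qgen p x ^ (p - 1) * w x

lemma cosh_ne (y : ℝ) : Real.cosh y ≠ 0 := (Real.cosh_pos y).ne'

lemma hd_cosh (b x : ℝ) : HasDerivAt (fun x => Real.cosh (b*x)) (Real.sinh (b*x) * b) x := by
  simpa using ((hasDerivAt_id x).const_mul b).cosh

lemma hd_sinh (b x : ℝ) : HasDerivAt (fun x => Real.sinh (b*x)) (Real.cosh (b*x) * b) x := by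
  simpa using ((hasDerivAt_id x).const_mul b).sinh

lemma hd_pow (b m x : ℝ) : HasDerivAt (fun x => Real.cosh (b*x) ^ m)
    (Real.sinh (b*x) * b * m * Real.cosh (b*x) ^ (m-1)) x :=
  (hd_cosh b x).rpow_const (Or.inl (cosh_ne _))

lemma D1 (K b m : ℝ) : deriv (fun x => K * Real.cosh (b*x) ^ m)
    = fun x => (K*m*b) * (Real.sinh (b*x) * Real.cosh (b*x) ^ (m-1)) := by
  funext x
  rw [((hd_pow b m x).const_mul K).deriv]; ring

lemma D2 (C b m : ℝ) : deriv (fun x => C * (Real.sinh (b*x) * Real.cosh (b*x) ^ m))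
    = fun x => C * (b * Real.cosh (b*x)^(m+1) + m*b*Real.sinh (b*x)^2 * Real.cosh (b*x)^(m-1)) := by
  funext x
  rw [(((hd_sinh b x).fun_mul (hd_pow b m x)).const_mul C).deriv,
    Real.rpow_add_one (cosh_ne _)]
  ring

lemma hd_sinhsq (b x : ℝ) : HasDerivAt (fun x => Real.sinh (b*x)^2)
    (2 * Real.sinh (b*x) * (Real.cosh (b*x) * b)) x := by
  simpa using (hd_sinh b x).fun_pow 2

lemma E2 (C b m : ℝ) :
    deriv (fun x => C * (b * Real.cosh (b*x)^(m+1) + m*b*Real.sinh (b*x)^2 * Real.cosh (b*x)^(m-1)))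
    = fun x => C * (b * (Real.sinh (b*x) * b * (m+1) * Real.cosh (b*x) ^ m)
        + m*b*(2 * Real.sinh (b*x) * (Real.cosh (b*x) * b) * Real.cosh (b*x) ^ (m-1)
          + Real.sinh (b*x)^2 * (Real.sinh (b*x) * b * (m-1) * Real.cosh (b*x) ^ (m-2)))) := by
  funext x
  have h : HasDerivAt (fun y => C * (b * Real.cosh (b*y)^(m+1) + m*b*(Real.sinh (b*y)^2 * Real.cosh (b*y)^(m-1))))
      (C * (b * (Real.sinh (b*x) * b * (m+1) * Real.cosh (b*x) ^ (m+1-1))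
        + m*b*(2 * Real.sinh (b*x) * (Real.cosh (b*x) * b) * Real.cosh (b*x) ^ (m-1)
          + Real.sinh (b*x)^2 * (Real.sinh (b*x) * b * (m-1) * Real.cosh (b*x) ^ (m-1-1))))) x :=
    (((hd_pow b (m+1) x).const_mul b).add
      (((hd_sinhsq b x).mul (hd_pow b (m-1) x)).const_mul (m*b))).const_mul C
  have hfun : (fun x => C * (b * Real.cosh (b*x)^(m+1) + m*b*Real.sinh (b*x)^2 * Real.cosh (b*x)^(m-1)))
      = (fun y => C * (b * Real.cosh (b*y)^(m+1) + m*b*(Real.sinh (b*y)^2 * Real.cosh (b*y)^(m-1)))) := by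
    funext y; ring
  have e1 : m + 1 - 1 = m := by ring
  have e2 : m - 1 - 1 = m - 2 := by ring
  rw [hfun, h.deriv, e1, e2]

lemma Qpow (p e x : ℝ) (hp : 1 < p) :
    Qgen p x ^ e = ((p+1)/2) ^ (e/(p-1)) *
      Real.cosh ((p-1)/2*x) ^ ((-2) * (e/(p-1))) := by
  set c := Real.cosh ((p-1)/2*x) with hcdef
  have hc : 0 < c := Real.cosh_pos _
  have hA : (0:ℝ) < (p+1)/(2*c^2) := by positivity
  have key : (p+1)/(2*c^2) = ((p+1)/2) * c ^ (-2 : ℝ) := by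
    rw [Real.rpow_neg hc.le, show ((2:ℝ)) = ((2:ℕ):ℝ) by norm_num, Real.rpow_natCast]
    field_simp
  have h1 : Qgen p x ^ e = ((p+1)/(2*c^2)) ^ (1/(p-1) * e) := by
    rw [Qgen, Real.rpow_mul hA.le]
  rw [h1, show (1/(p-1) * e) = e/(p-1) by ring, key,
    Real.mul_rpow (by positivity) (by positivity),
    ← Real.rpow_mul hc.le]

theorem L_eigenfunctions (p : ℝ) (hp : 1 < p) :
    (∀ x : ℝ,
      Lop p (fun y => Qgen p y ^ ((p + 1) / 2)) x
        = -(1 / 4) * (p - 1) * (p + 3) * Qgen p x ^ ((p + 1) / 2)) ∧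
    (∀ x : ℝ, Lop p (deriv (Qgen p)) x = 0) := by
  have hp1 : p - 1 ≠ 0 := sub_ne_zero.2 hp.ne'
  have hQp : ∀ x : ℝ, Qgen p x ^ (p-1)
      = (p+1)/(2*Real.cosh ((p-1)/2*x)^2) := by
    intro x
    have hA : (0:ℝ) < (p+1)/(2*Real.cosh ((p-1)/2*x)^2) := by positivity
    rw [Qgen, ← Real.rpow_mul hA.le, one_div, inv_mul_cancel₀ hp1, Real.rpow_one]
  constructor
  · -- first eigenfunction
    intro x
    set c := Real.cosh ((p-1)/2*x) with hcdef
    have hc : 0 < c := Real.cosh_pos _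
    set μ : ℝ := (-2) * ((p+1)/2/(p-1)) with hμ
    set K : ℝ := ((p+1)/2) ^ ((p+1)/2/(p-1)) with hK
    have hw : (fun y => Qgen p y ^ ((p + 1) / 2))
        = fun y => K * Real.cosh ((p-1)/2*y) ^ μ := by
      funext y; rw [hμ, hK]; exact Qpow p ((p+1)/2) y hp
    have goal2 : deriv (deriv (fun y => Qgen p y ^ ((p + 1) / 2))) x
        = (K*μ*((p-1)/2)) * ((p-1)/2 * c^(μ-1+1)
            + (μ-1)*((p-1)/2)*Real.sinh ((p-1)/2*x)^2 * c^(μ-1-1)) := by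
      rw [hw, D1 K ((p-1)/2) μ, D2 (K*μ*((p-1)/2)) ((p-1)/2) (μ-1)]
    have hQe : Qgen p x ^ ((p+1)/2) = K * c ^ μ := by
      rw [hcdef, hμ, hK]; exact Qpow p ((p+1)/2) x hp
    rw [Lop, goal2, hQp x, hQe, ← hcdef]
    have e1 : c ^ (μ-1+1) = c ^ μ := by rw [show μ-1+1 = μ by ring]
    have e2 : c ^ (μ-1-1) = c ^ μ / c^2 := by
      rw [show μ-1-1 = μ - 2 by ring, Real.rpow_sub hc,
        show ((2:ℝ)) = ((2:ℕ):ℝ) by norm_num, Real.rpow_natCast]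
    have hs : Real.sinh ((p-1)/2*x)^2 = c^2 - 1 := by
      rw [hcdef]; exact Real.sinh_sq _
    rw [e1, e2, hs]
    have hcne : c ≠ 0 := hc.ne'
    set u := c ^ μ with hu
    clear_value u
    rw [hμ]
    clear_value c
    field_simp
    ring
  · -- kernel element
    intro x
    set c := Real.cosh ((p-1)/2*x) with hcdef
    have hc : 0 < c := Real.cosh_pos _
    set m : ℝ := (-2) * (1/(p-1)) with hm
    set K : ℝ := ((p+1)/2) ^ (1/(p-1)) with hK
    have hQ1 : Qgen p = fun y => K * Real.cosh ((p-1)/2*y) ^ m := by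
      funext y
      rw [hm, hK, ← Qpow p 1 y hp, Real.rpow_one]
    set C : ℝ := K*m*((p-1)/2) with hC
    have hw2 : deriv (Qgen p)
        = fun y => C * (Real.sinh ((p-1)/2*y) * Real.cosh ((p-1)/2*y) ^ (m-1)) := by
      rw [hQ1, D1]
    have goal2 : deriv (deriv (deriv (Qgen p))) x
        = C * ((p-1)/2 * (Real.sinh ((p-1)/2*x) * ((p-1)/2) * (m-1+1) * c ^ (m-1))
        + (m-1)*((p-1)/2)*(2 * Real.sinh ((p-1)/2*x) * (c * ((p-1)/2)) * c ^ (m-1-1)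
          + Real.sinh ((p-1)/2*x)^2 * (Real.sinh ((p-1)/2*x) * ((p-1)/2) * (m-1-1) * c ^ (m-1-2)))) := by
      rw [hw2, D2 C ((p-1)/2) (m-1), E2 C ((p-1)/2) (m-1)]
    have hder : deriv (Qgen p) x
        = C * (Real.sinh ((p-1)/2*x) * c ^ (m-1)) := by
      rw [hw2]
    rw [Lop, goal2, hQp x, hder, ← hcdef]
    have e2 : c ^ (m-1-1) = c ^ (m-1) / c := by
      rw [show m-1-1 = (m-1) - 1 by ring, Real.rpow_sub hc, Real.rpow_one]
    have e3 : c ^ (m-1-2) = c ^ (m-1) / c^2 := by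
      rw [show m-1-2 = (m-1) - 2 by ring, Real.rpow_sub hc,
        show ((2:ℝ)) = ((2:ℕ):ℝ) by norm_num, Real.rpow_natCast]
    have hs : Real.sinh ((p-1)/2*x)^2 = c^2 - 1 := by
      rw [hcdef]; exact Real.sinh_sq _
    rw [e2, e3, hs]
    have hcne : c ≠ 0 := hc.ne'
    set u := c ^ (m-1) with hu
    set s := Real.sinh ((p-1)/2*x) with hsdef
    clear_value u s
    rw [hC, hm]
    clear_value c
    field_simp
    ring
end

section
/- Suppose f : ℝ → ℝ is twice continuously differentiable with f, f', f'' ∈ L²(ℝ), and suppose there exist constants K > 0 and r > 0 such that |f''(x) − f(x)| ≤ K·(1 + |x|^r)·e^{−|x|} for all x ∈ ℝ. Then there exists a constant K' > 0 such that |f(x)| ≤ K'·(1 + |x|^{r+1})·e^{−|x|} for all x ∈ ℝ. -/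
open Real MeasureTheory Set Filter

set_option maxHeartbeats 1000000 in
lemma decay_half (f : ℝ → ℝ) (hf : ContDiff ℝ 2 f)
    (hfL2 : Integrable (fun x => f x ^ 2))
    (hf'L2 : Integrable (fun x => deriv f x ^ 2))
    (K r : ℝ) (hK : 0 < K) (hr : 0 < r)
    (hode : ∀ x : ℝ, |deriv (deriv f) x - f x| ≤ K * (1 + |x| ^ r) * Real.exp (-|x|)) :
    ∃ K' : ℝ, 0 < K' ∧ ∀ x : ℝ, 0 ≤ x → |f x| ≤ K' * (1 + x ^ (r + 1)) * Real.exp (-x) := by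
  -- regularity
  have h2 : ContDiff ℝ (1+1) f := by exact_mod_cast hf
  have h1 : ContDiff ℝ 1 (deriv f) := (contDiff_succ_iff_deriv.mp h2).2.2
  have h0 : ContDiff ℝ (0+1) (deriv f) := by exact_mod_cast h1
  have hdf : Differentiable ℝ f := hf.differentiable two_ne_zero
  have hdf' : Differentiable ℝ (deriv f) := h1.differentiable one_ne_zero
  have hcf'' : Continuous (deriv (deriv f)) := (contDiff_succ_iff_deriv.mp h0).2.2.continuous
  set g : ℝ → ℝ := fun t => deriv (deriv f) t - f t with hg_def
  have hgc : Continuous g := hcf''.sub hf.continuous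
  -- u = f' + f
  set u : ℝ → ℝ := fun t => deriv f t + f t with hu_def
  have huc : Continuous u := hdf'.continuous.add hdf.continuous
  set w : ℝ → ℝ := fun t => Real.exp (-t) * u t with hw_def
  have hw : ∀ t, HasDerivAt w (Real.exp (-t) * g t) t := by
    intro t
    have h1 : HasDerivAt (fun t : ℝ => Real.exp (-t)) (-Real.exp (-t)) t := by
      simpa using ((hasDerivAt_neg t).exp)
    have h2 : HasDerivAt u (deriv (deriv f) t + deriv f t) t :=
      ((hdf' t).hasDerivAt).add ((hdf t).hasDerivAt)
    have : HasDerivAt (fun y => Real.exp (-y) * u y)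
        (-Real.exp (-t) * u t + Real.exp (-t) * (deriv (deriv f) t + deriv f t)) t := h1.mul h2
    convert this using 1
    simp only [hg_def, hu_def]; ring
  have hwint : ∀ x : ℝ, w x - w 0 = ∫ t in (0:ℝ)..x, Real.exp (-t) * g t := by
    intro x
    rw [intervalIntegral.integral_eq_sub_of_hasDerivAt (fun t _ => hw t)]
    exact ((Real.continuous_exp.comp continuous_neg).mul hgc).intervalIntegrable 0 x
  -- integrability of e^{-t} g on Ioi 0
  have hgamma : IntegrableOn (fun t : ℝ => t ^ r * Real.exp (-t)) (Ioi 0) := by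
    have := Real.GammaIntegral_convergent (s := r+1) (by linarith)
    simpa [mul_comm] using this
  have hexpi : IntegrableOn (fun t : ℝ => Real.exp (-t)) (Ioi 0) := by
    have := exp_neg_integrableOn_Ioi 0 (b := 1) one_pos
    simpa using this
  have hdom : IntegrableOn (fun t : ℝ => K * Real.exp (-t) + K * (t ^ r * Real.exp (-t))) (Ioi 0) :=
    (hexpi.const_mul K).add (hgamma.const_mul K)
  have hbound : ∀ t : ℝ, 0 ≤ t → ‖Real.exp (-t) * g t‖ ≤ K * Real.exp (-t) + K * (t ^ r * Real.exp (-t)) := by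
    intro t ht
    have h1 := hode t
    rw [abs_of_nonneg ht] at h1
    have het : Real.exp (-t) ≤ 1 := Real.exp_le_one_iff.mpr (by linarith)
    have hetpos : (0:ℝ) < Real.exp (-t) := Real.exp_pos _
    have htr : (0:ℝ) ≤ t ^ r := Real.rpow_nonneg ht r
    calc ‖Real.exp (-t) * g t‖ = Real.exp (-t) * |g t| := by
          rw [norm_mul, Real.norm_eq_abs, Real.norm_eq_abs, abs_of_pos hetpos]
      _ ≤ 1 * (K * (1 + t ^ r) * Real.exp (-t)) := by
          apply mul_le_mul het h1 (abs_nonneg _) zero_le_one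
      _ = K * Real.exp (-t) + K * (t ^ r * Real.exp (-t)) := by ring
  have hgi : IntegrableOn (fun t : ℝ => Real.exp (-t) * g t) (Ioi 0) := by
    apply Integrable.mono' hdom
      (((Real.continuous_exp.comp continuous_neg).mul hgc).aestronglyMeasurable)
    filter_upwards [ae_restrict_mem measurableSet_Ioi] with t ht
    exact hbound t (le_of_lt ht)
  set I : ℝ := ∫ t in Ioi 0, Real.exp (-t) * g t with hI_def
  have htend : Tendsto (fun x : ℝ => ∫ t in (0:ℝ)..x, Real.exp (-t) * g t) atTop (nhds I) :=
    intervalIntegral_tendsto_integral_Ioi 0 hgi tendsto_id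
  have hwtend : Tendsto w atTop (nhds (w 0 + I)) := by
    have : ∀ x, w x = w 0 + ∫ t in (0:ℝ)..x, Real.exp (-t) * g t := by
      intro x; have := hwint x; linarith
    refine (tendsto_const_nhds.add htend).congr fun x => ?_
    exact (this x).symm
  -- L = 0
  have hL : w 0 + I = 0 := by
    by_contra hLne
    set L := w 0 + I with hLdef
    have hLpos : 0 < |L| := abs_pos.mpr hLne
    have hev : ∀ᶠ x in atTop, |w x - L| < |L| / 2 := by
      have := Metric.tendsto_nhds.mp hwtend (|L|/2) (by linarith)
      simpa [Real.dist_eq] using this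
    rcases (hev.and (eventually_ge_atTop (0:ℝ))).exists_forall_of_atTop with ⟨M, hM⟩
    -- u^2 integrable
    have hu2 : Integrable (fun x => u x ^ 2) := by
      apply Integrable.mono' ((hf'L2.const_mul 2).add (hfL2.const_mul 2))
        ((huc.pow 2).aestronglyMeasurable)
      filter_upwards with x
      have : u x ^ 2 ≤ 2 * deriv f x ^ 2 + 2 * f x ^ 2 := by
        simp only [hu_def]; nlinarith [sq_nonneg (deriv f x - f x)]
      simpa [abs_of_nonneg (sq_nonneg (u x))] using this
    have hconst : Integrable (fun _ : ℝ => (|L|/2)^2) (volume.restrict (Ioi M)) := by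
      apply Integrable.mono (hu2.restrict (s := Ioi M)) aestronglyMeasurable_const
      filter_upwards [ae_restrict_mem measurableSet_Ioi] with x hx
      have hx' := hM x (le_of_lt hx)
      have h1 : |L|/2 ≤ |w x| := by
        have hle := abs_sub_abs_le_abs_sub L (w x)
        rw [abs_sub_comm] at hle
        linarith [hx'.1, hle]
      have h2 : |w x| ≤ |u x| := by
        have hex : Real.exp (-x) ≤ 1 := Real.exp_le_one_iff.mpr (by linarith [hx'.2])
        calc |w x| = Real.exp (-x) * |u x| := by
              rw [hw_def]; simp [abs_mul, abs_of_pos (Real.exp_pos (-x))]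
          _ ≤ 1 * |u x| := mul_le_mul_of_nonneg_right hex (abs_nonneg _)
          _ = |u x| := one_mul _
      have h3 : (|L|/2)^2 ≤ u x ^ 2 := by
        have h3' : |L|/2 ≤ |u x| := le_trans h1 h2
        have h4 : (|L|/2)^2 ≤ |u x|^2 := pow_le_pow_left₀ (by positivity) h3' 2
        rwa [sq_abs] at h4
      simp only [Real.norm_eq_abs]
      rw [abs_of_nonneg (sq_nonneg _), abs_of_nonneg (sq_nonneg (u x))]
      exact h3
    rcases integrable_const_iff.mp hconst with h|h
    · exact (pow_ne_zero 2 (by positivity : |L|/2 ≠ 0)) h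
    · have h := h.measure_univ_lt_top
      simp [Measure.restrict_apply_univ] at h
  -- representation of w on x ≥ 0
  have hwrep : ∀ x : ℝ, 0 ≤ x → w x = -∫ t in Ioi x, Real.exp (-t) * g t := by
    intro x hx
    have hsplit : I = (∫ t in Ioc 0 x, Real.exp (-t) * g t)
        + ∫ t in Ioi x, Real.exp (-t) * g t := by
      rw [hI_def, ← setIntegral_union (Ioc_disjoint_Ioi le_rfl) measurableSet_Ioi
        (hgi.mono_set Ioc_subset_Ioi_self) (hgi.mono_set (Ioi_subset_Ioi hx)),
        Ioc_union_Ioi_eq_Ioi hx]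
    have hint : (∫ t in (0:ℝ)..x, Real.exp (-t) * g t)
        = ∫ t in Ioc 0 x, Real.exp (-t) * g t := intervalIntegral.integral_of_le hx
    have h5 := hwint x
    rw [hint] at h5
    linarith
  -- translation identity
  have hshift : ∀ (h : ℝ → ℝ) (x : ℝ), ∫ t in Ioi x, h t = ∫ s in Ioi 0, h (s + x) := by
    intro h x
    rw [← integral_indicator measurableSet_Ioi, ← integral_indicator measurableSet_Ioi,
      ← integral_add_right_eq_self _ x]
    congr 1
    funext s
    simp [indicator, mem_Ioi]
  -- (a+b)^r ≤ 2^r (a^r + b^r)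
  have hrpow : ∀ a b : ℝ, 0 ≤ a → 0 ≤ b → (a+b) ^ r ≤ 2 ^ r * (a ^ r + b ^ r) := by
    intro a b ha hb
    rcases le_total a b with hab | hab
    · calc (a+b) ^ r ≤ (2*b) ^ r :=
            Real.rpow_le_rpow (by linarith) (by linarith) hr.le
        _ = 2 ^ r * b ^ r := Real.mul_rpow (by norm_num) hb
        _ ≤ 2 ^ r * (a ^ r + b ^ r) := by
            have := Real.rpow_nonneg ha r
            have h2 : (0:ℝ) < 2 ^ r := Real.rpow_pos_of_pos two_pos r
            nlinarith
    · calc (a+b) ^ r ≤ (2*a) ^ r :=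
            Real.rpow_le_rpow (by linarith) (by linarith) hr.le
        _ = 2 ^ r * a ^ r := Real.mul_rpow (by norm_num) ha
        _ ≤ 2 ^ r * (a ^ r + b ^ r) := by
            have := Real.rpow_nonneg hb r
            have h2 : (0:ℝ) < 2 ^ r := Real.rpow_pos_of_pos two_pos r
            nlinarith
  set E : ℝ := ∫ s in Ioi 0, s ^ r * Real.exp (-s) with hE_def
  have hEnn : 0 ≤ E := setIntegral_nonneg measurableSet_Ioi fun s hs =>
    mul_nonneg (Real.rpow_nonneg (le_of_lt hs) r) (Real.exp_pos _).le
  have h2r : (0:ℝ) < 2 ^ r := Real.rpow_pos_of_pos two_pos r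
  -- bound on u
  have hub : ∀ x : ℝ, 0 ≤ x →
      |u x| ≤ K * (1 + 2 ^ r * E + 2 ^ r) * ((1 + x ^ r) * Real.exp (-x)) := by
    intro x hx
    have hxr : (0:ℝ) ≤ x ^ r := Real.rpow_nonneg hx r
    have hwb : |w x| ≤ K * Real.exp (-2*x) * ((1 + 2 ^ r * x ^ r) + 2 ^ r * E) := by
      rw [hwrep x hx, abs_neg]
      have step1 : |∫ t in Ioi x, Real.exp (-t) * g t|
          ≤ ∫ t in Ioi x, ‖Real.exp (-t) * g t‖ := by
        simpa using norm_integral_le_integral_norm (fun t => Real.exp (-t) * g t)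
          (μ := volume.restrict (Ioi x))
      have step2 : (∫ t in Ioi x, ‖Real.exp (-t) * g t‖)
          = ∫ s in Ioi 0, ‖Real.exp (-(s+x)) * g (s+x)‖ :=
        hshift (fun t => ‖Real.exp (-t) * g t‖) x
      have hdom2 : IntegrableOn (fun s : ℝ =>
          K * Real.exp (-2*x) * ((1 + 2 ^ r * x ^ r) * Real.exp (-s)
            + 2 ^ r * (s ^ r * Real.exp (-s)))) (Ioi 0) :=
        (((hexpi.const_mul _).add (hgamma.const_mul _)).const_mul _)
      have step3 : (∫ s in Ioi 0, ‖Real.exp (-(s+x)) * g (s+x)‖)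
          ≤ ∫ s in Ioi 0, K * Real.exp (-2*x) * ((1 + 2 ^ r * x ^ r) * Real.exp (-s)
            + 2 ^ r * (s ^ r * Real.exp (-s))) := by
        apply integral_mono_of_nonneg
        · filter_upwards with s
          exact norm_nonneg _
        · exact hdom2
        · filter_upwards [ae_restrict_mem measurableSet_Ioi] with s hs
          have hs0 : (0:ℝ) < s := hs
          have hsx : (0:ℝ) ≤ s + x := by linarith
          have hg1 := hode (s+x)
          rw [abs_of_nonneg hsx] at hg1
          have hsr : (0:ℝ) ≤ s ^ r := Real.rpow_nonneg hs0.le r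
          have hrp := hrpow s x hs0.le hx
          have hee : Real.exp (-(2*(s+x))) = Real.exp (-2*x) * Real.exp (-2*s) := by
            rw [← Real.exp_add]; ring_nf
          have he2s : Real.exp (-(2*s)) ≤ Real.exp (-s) :=
            Real.exp_le_exp.mpr (by linarith)
          calc ‖Real.exp (-(s+x)) * g (s+x)‖
              = Real.exp (-(s+x)) * |g (s+x)| := by
                rw [norm_mul, Real.norm_eq_abs, Real.norm_eq_abs,
                  abs_of_pos (Real.exp_pos _)]
            _ ≤ Real.exp (-(s+x)) * (K * (1 + (s+x) ^ r) * Real.exp (-(s+x))) :=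
                mul_le_mul_of_nonneg_left hg1 (Real.exp_pos _).le
            _ = K * (1 + (s+x) ^ r) * Real.exp (-(2*(s+x))) := by
                have he : Real.exp (-(s+x)) * Real.exp (-(s+x)) = Real.exp (-(2*(s+x))) := by
                  rw [← Real.exp_add]; ring_nf
                rw [← he]; ring
            _ ≤ K * (1 + 2 ^ r * (s ^ r + x ^ r)) * (Real.exp (-2*x) * Real.exp (-2*s)) := by
                rw [← hee]
                apply mul_le_mul_of_nonneg_right _ (Real.exp_pos _).le
                have : (1:ℝ) + (s+x) ^ r ≤ 1 + 2 ^ r * (s ^ r + x ^ r) := by linarith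
                nlinarith [Real.rpow_nonneg hsx r]
            _ ≤ K * Real.exp (-2*x) * ((1 + 2 ^ r * x ^ r) * Real.exp (-s)
                + 2 ^ r * (s ^ r * Real.exp (-s))) := by
                have hx2 : Real.exp (-(2:ℝ)*s) ≤ Real.exp (-s) := by
                  rw [show (-(2:ℝ)*s) = -(2*s) by ring]; exact he2s
                have hexps : (0:ℝ) < Real.exp (-s) := Real.exp_pos _
                have hexp2s : (0:ℝ) < Real.exp (-2*s) := Real.exp_pos _
                have hKe : (0:ℝ) ≤ K * Real.exp (-2*x) := by positivity
                nlinarith [mul_le_mul_of_nonneg_left hx2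
                  (by positivity : (0:ℝ) ≤ K * Real.exp (-2*x) * (1 + 2 ^ r * (s ^ r + x ^ r)))]
      have step4 : (∫ s in Ioi 0, K * Real.exp (-2*x) * ((1 + 2 ^ r * x ^ r) * Real.exp (-s)
            + 2 ^ r * (s ^ r * Real.exp (-s))))
          = K * Real.exp (-2*x) * ((1 + 2 ^ r * x ^ r) + 2 ^ r * E) := by
        rw [integral_const_mul, integral_add (hexpi.const_mul _) (hgamma.const_mul _),
          integral_const_mul, integral_const_mul, integral_exp_neg_Ioi_zero, hE_def, mul_one]
      calc |∫ t in Ioi x, Real.exp (-t) * g t|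
          ≤ ∫ t in Ioi x, ‖Real.exp (-t) * g t‖ := step1
        _ = ∫ s in Ioi 0, ‖Real.exp (-(s+x)) * g (s+x)‖ := step2
        _ ≤ _ := step3
        _ = _ := step4
    have huw : |u x| = Real.exp x * |w x| := by
      rw [hw_def]
      simp only [abs_mul, abs_of_pos (Real.exp_pos (-x))]
      rw [← mul_assoc, ← Real.exp_add]
      simp
    rw [huw]
    have hexpand : Real.exp x * (K * Real.exp (-2*x) * ((1 + 2 ^ r * x ^ r) + 2 ^ r * E))
        = K * ((1 + 2 ^ r * x ^ r) + 2 ^ r * E) * Real.exp (-x) := by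
      rw [show Real.exp x * (K * Real.exp (-2*x) * ((1 + 2 ^ r * x ^ r) + 2 ^ r * E))
        = (Real.exp x * Real.exp (-2*x)) * (K * ((1 + 2 ^ r * x ^ r) + 2 ^ r * E)) by ring,
        ← Real.exp_add]
      ring_nf
    calc Real.exp x * |w x| ≤ Real.exp x * (K * Real.exp (-2*x)
          * ((1 + 2 ^ r * x ^ r) + 2 ^ r * E)) :=
          mul_le_mul_of_nonneg_left hwb (Real.exp_pos _).le
      _ = K * ((1 + 2 ^ r * x ^ r) + 2 ^ r * E) * Real.exp (-x) := hexpand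
      _ ≤ K * (1 + 2 ^ r * E + 2 ^ r) * ((1 + x ^ r) * Real.exp (-x)) := by
          have hexpx : (0:ℝ) < Real.exp (-x) := Real.exp_pos _
          have hfac : (1 + 2 ^ r * x ^ r) + 2 ^ r * E
              ≤ (1 + 2 ^ r * E + 2 ^ r) * (1 + x ^ r) := by
            nlinarith [mul_nonneg h2r.le (mul_nonneg hEnn hxr), mul_nonneg h2r.le hxr]
          have h9 := mul_le_mul_of_nonneg_right
            (mul_le_mul_of_nonneg_left hfac hK.le) hexpx.le
          nlinarith [h9]
  -- bound on v
  set v : ℝ → ℝ := fun t => deriv f t - f t with hv_def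
  set p : ℝ → ℝ := fun t => Real.exp t * v t with hp_def
  have hp : ∀ t, HasDerivAt p (Real.exp t * g t) t := by
    intro t
    have h1 : HasDerivAt (fun t : ℝ => Real.exp t) (Real.exp t) t := Real.hasDerivAt_exp t
    have h2 : HasDerivAt v (deriv (deriv f) t - deriv f t) t :=
      ((hdf' t).hasDerivAt).sub ((hdf t).hasDerivAt)
    have : HasDerivAt (fun y => Real.exp y * v y)
        (Real.exp t * v t + Real.exp t * (deriv (deriv f) t - deriv f t)) t := h1.mul h2
    convert this using 1
    simp only [hg_def, hv_def]; ring
  have hpint : ∀ x : ℝ, p x - p 0 = ∫ t in (0:ℝ)..x, Real.exp t * g t := by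
    intro x
    rw [intervalIntegral.integral_eq_sub_of_hasDerivAt (fun t _ => hp t)]
    exact (Real.continuous_exp.mul hgc).intervalIntegrable 0 x
  have hvb : ∀ x : ℝ, 0 ≤ x →
      |v x| ≤ (|p 0| + K * ((1 + x ^ r) * x)) * Real.exp (-x) := by
    intro x hx
    have hbd : ∀ t ∈ Set.uIoc (0:ℝ) x, ‖Real.exp t * g t‖ ≤ K * (1 + x ^ r) := by
      intro t ht
      rw [Set.uIoc_of_le hx] at ht
      have ht0 : (0:ℝ) < t := ht.1
      have htx : t ≤ x := ht.2
      have hg1 := hode t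
      rw [abs_of_nonneg ht0.le] at hg1
      have htr : t ^ r ≤ x ^ r := Real.rpow_le_rpow ht0.le htx hr.le
      calc ‖Real.exp t * g t‖ = Real.exp t * |g t| := by
            rw [norm_mul, Real.norm_eq_abs, Real.norm_eq_abs, abs_of_pos (Real.exp_pos _)]
        _ ≤ Real.exp t * (K * (1 + t ^ r) * Real.exp (-t)) :=
            mul_le_mul_of_nonneg_left hg1 (Real.exp_pos _).le
        _ = K * (1 + t ^ r) * (Real.exp t * Real.exp (-t)) := by ring
        _ = K * (1 + t ^ r) := by rw [← Real.exp_add]; simp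
        _ ≤ K * (1 + x ^ r) := by nlinarith
    have hib : ‖∫ t in (0:ℝ)..x, Real.exp t * g t‖ ≤ K * (1 + x ^ r) * |x - 0| :=
      intervalIntegral.norm_integral_le_of_norm_le_const hbd
    have hpx : |p x| ≤ |p 0| + K * ((1 + x ^ r) * x) := by
      have h6 := hpint x
      have : |p x - p 0| ≤ K * (1 + x ^ r) * x := by
        rw [h6]
        simpa [abs_of_nonneg hx] using hib
      calc |p x| = |p 0 + (p x - p 0)| := by ring_nf
        _ ≤ |p 0| + |p x - p 0| := abs_add_le _ _
        _ ≤ |p 0| + K * ((1 + x ^ r) * x) := by rw [mul_assoc] at this; linarith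
    have hvp : |v x| = Real.exp (-x) * |p x| := by
      rw [hp_def]
      simp only [abs_mul, abs_of_pos (Real.exp_pos x)]
      rw [← mul_assoc, ← Real.exp_add]
      simp
    rw [hvp]
    calc Real.exp (-x) * |p x| ≤ Real.exp (-x) * (|p 0| + K * ((1 + x ^ r) * x)) :=
          mul_le_mul_of_nonneg_left hpx (Real.exp_pos _).le
      _ = (|p 0| + K * ((1 + x ^ r) * x)) * Real.exp (-x) := mul_comm _ _
  -- assemble
  refine ⟨K * (1 + 2 ^ r * E + 2 ^ r) + |p 0| + 2*K + 1, by positivity, fun x hx => ?_⟩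
  have hfx : f x = (u x - v x) / 2 := by simp only [hu_def, hv_def]; ring
  have habs : |f x| ≤ (|u x| + |v x|) / 2 := by
    rw [hfx]
    calc |(u x - v x)/2| = |u x - v x|/2 := by rw [abs_div]; norm_num
      _ ≤ (|u x| + |v x|)/2 := by
          have := abs_add_le (u x) (-(v x))
          rw [abs_neg] at this
          have h10 : |u x - v x| ≤ |u x| + |v x| := by
            simpa [sub_eq_add_neg] using this
          linarith
  have h7 := hub x hx
  have h8 := hvb x hx
  have hxr : (0:ℝ) ≤ x ^ r := Real.rpow_nonneg hx r
  have hxr1 : (0:ℝ) ≤ x ^ (r+1) := Real.rpow_nonneg hx (r+1)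
  have hxx : x * x ^ r = x ^ (r+1) := by
    rcases eq_or_lt_of_le hx with h|h
    · rw [← h]; simp [Real.zero_rpow (by positivity : r + 1 ≠ 0), Real.zero_rpow hr.ne']
    · rw [Real.rpow_add_one' hx (by positivity : r + 1 ≠ 0)]
      ring
  have hxle : x ≤ 1 + x ^ (r+1) := by
    rcases le_total x 1 with h|h
    · linarith
    · have : (1:ℝ) ≤ x ^ r := Real.one_le_rpow h hr.le
      nlinarith
  have hexpx : (0:ℝ) < Real.exp (-x) := Real.exp_pos _
  have hKE : (0:ℝ) ≤ K * (1 + 2 ^ r * E + 2 ^ r) := by positivity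
  -- (1+x^r) ≤ 2 + x^{r+1}... and main arithmetic
  have hxr_le : x ^ r ≤ 1 + x ^ (r+1) := by
    rcases le_total x 1 with h|h
    · have : x ^ r ≤ 1 := Real.rpow_le_one hx h hr.le
      linarith
    · have h1x : (1:ℝ) ≤ x := h
      have : x ^ r ≤ x ^ (r+1) := Real.rpow_le_rpow_of_exponent_le h1x (by linarith)
      linarith
  have expand : (1 + x ^ r) * x = x + x ^ (r+1) := by
    rw [add_mul, one_mul, mul_comm (x ^ r) x, hxx]
  rw [expand] at h8
  have hA : (0:ℝ) ≤ K * (1 + 2 ^ r * E + 2 ^ r) := hKE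
  have hP : (0:ℝ) ≤ |p 0| := abs_nonneg _
  have h7' : |u x| ≤ (K * (1 + 2 ^ r * E + 2 ^ r)) * ((2 + x ^ (r+1)) * Real.exp (-x)) := by
    refine h7.trans ?_
    apply mul_le_mul_of_nonneg_left _ hA
    apply mul_le_mul_of_nonneg_right _ hexpx.le
    linarith [hxr_le]
  have h8' : |v x| ≤ (|p 0| + 2*K + 2*K*x^(r+1)) * Real.exp (-x) := by
    refine h8.trans ?_
    apply mul_le_mul_of_nonneg_right _ hexpx.le
    nlinarith [mul_le_mul_of_nonneg_left hxle hK.le, mul_nonneg hK.le hxr1]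
  have hnum : (K * (1 + 2 ^ r * E + 2 ^ r)) * (2 + x ^ (r+1)) + (|p 0| + 2*K + 2*K*x^(r+1))
      ≤ 2 * ((K * (1 + 2 ^ r * E + 2 ^ r) + |p 0| + 2*K + 1) * (1 + x ^ (r+1))) := by
    nlinarith [mul_nonneg hA hxr1, mul_nonneg hP hxr1, mul_nonneg hK.le hxr1]
  nlinarith [mul_le_mul_of_nonneg_right hnum hexpx.le, h7', h8', habs]

theorem decay_from_ode_estimate (f : ℝ → ℝ)
    (hf : ContDiff ℝ 2 f)
    (hfL2 : Integrable (fun x => f x ^ 2))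
    (hf'L2 : Integrable (fun x => deriv f x ^ 2))
    (hf''L2 : Integrable (fun x => deriv (deriv f) x ^ 2))
    (K r : ℝ) (hK : 0 < K) (hr : 0 < r)
    (hode : ∀ x : ℝ, |deriv (deriv f) x - f x| ≤ K * (1 + |x| ^ r) * Real.exp (-|x|)) :
    ∃ K' : ℝ, 0 < K' ∧ ∀ x : ℝ, |f x| ≤ K' * (1 + |x| ^ (r + 1)) * Real.exp (-|x|) := by
  obtain ⟨K₁, hK₁, hb₁⟩ := decay_half f hf hfL2 hf'L2 K r hK hr hode
  -- reflected function
  set F : ℝ → ℝ := fun x => f (-x) with hF_def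
  have hFc : ContDiff ℝ 2 F := hf.comp contDiff_neg
  have hdF : deriv F = fun x => -deriv f (-x) := funext fun x => deriv_comp_neg f x
  have hddF : deriv (deriv F) = fun x => deriv (deriv f) (-x) := by
    funext x
    rw [hdF]
    have : deriv (fun y : ℝ => -deriv f (-y)) x = -deriv (fun y : ℝ => deriv f (-y)) x :=
      deriv.neg
    rw [this, deriv_comp_neg (deriv f) x, neg_neg]
  have hFL2 : Integrable (fun x => F x ^ 2) := by
    have := (hfL2.comp_neg (μ := volume))
    simpa [hF_def] using this
  have hF'L2 : Integrable (fun x => deriv F x ^ 2) := by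
    rw [hdF]
    have := (hf'L2.comp_neg (μ := volume))
    simpa using this
  have hFode : ∀ x : ℝ, |deriv (deriv F) x - F x| ≤ K * (1 + |x| ^ r) * Real.exp (-|x|) := by
    intro x
    rw [hddF]
    simpa [abs_neg] using hode (-x)
  obtain ⟨K₂, hK₂, hb₂⟩ := decay_half F hFc hFL2 hF'L2 K r hK hr hFode
  refine ⟨max K₁ K₂, lt_max_of_lt_left hK₁, fun x => ?_⟩
  have hnn : (0:ℝ) ≤ (1 + |x| ^ (r+1)) * Real.exp (-|x|) := by
    have : (0:ℝ) ≤ |x| ^ (r+1) := Real.rpow_nonneg (abs_nonneg x) _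
    positivity
  rcases le_total 0 x with hx | hx
  · have := hb₁ x hx
    rw [abs_of_nonneg hx]
    calc |f x| ≤ K₁ * (1 + x ^ (r+1)) * Real.exp (-x) := this
      _ ≤ max K₁ K₂ * (1 + x ^ (r+1)) * Real.exp (-x) := by
          have h1 : K₁ ≤ max K₁ K₂ := le_max_left _ _
          have h2 : (0:ℝ) ≤ (1 + x ^ (r+1)) * Real.exp (-x) := by
            have : (0:ℝ) ≤ x ^ (r+1) := Real.rpow_nonneg hx _
            positivity
          rw [mul_assoc, mul_assoc]
          exact mul_le_mul_of_nonneg_right h1 h2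
  · have hx' : 0 ≤ -x := by linarith
    have := hb₂ (-x) hx'
    have hFx : F (-x) = f x := by simp [hF_def]
    rw [hFx] at this
    rw [abs_of_nonpos hx]
    calc |f x| ≤ K₂ * (1 + (-x) ^ (r+1)) * Real.exp (-(-x)) := this
      _ ≤ max K₁ K₂ * (1 + (-x) ^ (r+1)) * Real.exp (-(-x)) := by
          have h1 : K₂ ≤ max K₁ K₂ := le_max_right _ _
          have h2 : (0:ℝ) ≤ (1 + (-x) ^ (r+1)) * Real.exp (-(-x)) := by
            have : (0:ℝ) ≤ (-x) ^ (r+1) := Real.rpow_nonneg hx' _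
            positivity
          rw [mul_assoc, mul_assoc]
          exact mul_le_mul_of_nonneg_right h1 h2
end

section
/- Let p > 1 be real, let V₀(x) = −(1/(p−1))·Q(x) − (3/2)·x·Q'(x), and let Z₀ = 3Q'' + 3V₀'' + p·Q^{p−1}·V₀. Then ∫_ℝ Z₀(x)·Q(x) dx = ((p−5)/(4(p−1)))·∫_ℝ Q(x)² dx. In particular ∫_ℝ Z₀·Q ≠ 0 whenever p ≠ 5. -/
open Real MeasureTheory

open Set Filter

variable {p : ℝ}

lemma base_pos (hp : 1 < p) (x : ℝ) :
    0 < (p + 1) / (2 * Real.cosh ((p - 1) / 2 * x) ^ 2) :=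
  div_pos (by linarith) (by positivity)

lemma Q_pos (hp : 1 < p) (x : ℝ) : 0 < Qgen p x :=
  Real.rpow_pos_of_pos (base_pos hp x) _

lemma Q_rpow (hp : 1 < p) (x : ℝ) :
    Qgen p x ^ (p - 1) = (p + 1) / (2 * Real.cosh ((p - 1) / 2 * x) ^ 2) := by
  rw [Qgen, ← Real.rpow_mul (base_pos hp x).le,
    one_div_mul_cancel (by linarith : p - 1 ≠ 0), Real.rpow_one]

lemma Q_hasDeriv (hp : 1 < p) (x : ℝ) :
    HasDerivAt (Qgen p)
      (-(Qgen p x * (Real.sinh ((p - 1) / 2 * x) / Real.cosh ((p - 1) / 2 * x)))) x := by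
  have hc := Real.cosh_pos ((p - 1) / 2 * x)
  have h1 : HasDerivAt (fun y : ℝ => (p - 1) / 2 * y) ((p - 1) / 2) x := by
    simpa using (hasDerivAt_id x).const_mul ((p - 1) / 2)
  have h2 : HasDerivAt (fun y : ℝ => Real.cosh ((p - 1) / 2 * y))
      (Real.sinh ((p - 1) / 2 * x) * ((p - 1) / 2)) x :=
    (Real.hasDerivAt_cosh _).comp x h1
  have h3 : HasDerivAt (fun y : ℝ => 2 * Real.cosh ((p - 1) / 2 * y) ^ 2)
      (2 * (2 * Real.cosh ((p - 1) / 2 * x) ^ 1 * (Real.sinh ((p - 1) / 2 * x) * ((p - 1) / 2)))) x :=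
    (h2.pow 2).const_mul 2
  have hg : HasDerivAt (fun y : ℝ => (p + 1) / (2 * Real.cosh ((p - 1) / 2 * y) ^ 2))
      ((0 * (2 * Real.cosh ((p - 1) / 2 * x) ^ 2) - (p + 1) *
        (2 * (2 * Real.cosh ((p - 1) / 2 * x) ^ 1 * (Real.sinh ((p - 1) / 2 * x) * ((p - 1) / 2)))))
        / (2 * Real.cosh ((p - 1) / 2 * x) ^ 2) ^ 2) x :=
    (hasDerivAt_const x (p + 1)).div h3 (by positivity)
  have h4 := hg.rpow_const (p := 1 / (p - 1)) (Or.inl (ne_of_gt (base_pos hp x)))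
  refine h4.congr_deriv (Eq.symm ?_)
  have hbe : ((p + 1) / (2 * Real.cosh ((p - 1) / 2 * x) ^ 2)) ^ (1 / (p - 1) - 1)
      = Qgen p x / ((p + 1) / (2 * Real.cosh ((p - 1) / 2 * x) ^ 2)) := by
    rw [Real.rpow_sub (base_pos hp x), Real.rpow_one, Qgen]
  rw [hbe]
  have hC := (Real.cosh_pos ((p - 1) / 2 * x)).ne'
  have hp1 : p - 1 ≠ 0 := by linarith
  have hp2 : p + 1 ≠ 0 := by linarith
  set C := Real.cosh ((p - 1) / 2 * x)
  set S := Real.sinh ((p - 1) / 2 * x)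
  set q := Qgen p x
  field_simp
  ring

lemma derivQ_eq (hp : 1 < p) : deriv (Qgen p) = fun x =>
    -(Qgen p x * (Real.sinh ((p - 1) / 2 * x) / Real.cosh ((p - 1) / 2 * x))) :=
  funext fun x => (Q_hasDeriv hp x).deriv

lemma Q_p (hp : 1 < p) (x : ℝ) : Qgen p x ^ p = Qgen p x ^ (p - 1) * Qgen p x := by
  have h := Real.rpow_add (Q_pos hp x) (p - 1) 1
  rw [Real.rpow_one] at h
  rw [← h, sub_add_cancel]

lemma Q_p1 (hp : 1 < p) (x : ℝ) : Qgen p x ^ (p + 1) = Qgen p x ^ (p - 1) * Qgen p x ^ 2 := by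
  have h := Real.rpow_add (Q_pos hp x) (p - 1) 2
  rw [show ((2:ℝ)) = ((2:ℕ):ℝ) by norm_num, Real.rpow_natCast] at h
  push_cast at h
  rw [← h, show p - 1 + 2 = p + 1 by ring]

lemma derivQ_hasDeriv (hp : 1 < p) (x : ℝ) :
    HasDerivAt (deriv (Qgen p)) (Qgen p x - Qgen p x ^ p) x := by
  rw [derivQ_eq hp]
  have hc := Real.cosh_pos ((p - 1) / 2 * x)
  have h1 : HasDerivAt (fun y : ℝ => (p - 1) / 2 * y) ((p - 1) / 2) x := by
    simpa using (hasDerivAt_id x).const_mul ((p - 1) / 2)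
  have hS : HasDerivAt (fun y : ℝ => Real.sinh ((p - 1) / 2 * y))
      (Real.cosh ((p - 1) / 2 * x) * ((p - 1) / 2)) x := (Real.hasDerivAt_sinh _).comp x h1
  have hC : HasDerivAt (fun y : ℝ => Real.cosh ((p - 1) / 2 * y))
      (Real.sinh ((p - 1) / 2 * x) * ((p - 1) / 2)) x := (Real.hasDerivAt_cosh _).comp x h1
  have hT := hS.div hC hc.ne'
  have h := ((Q_hasDeriv hp x).mul hT).neg
  refine h.congr_deriv (Eq.symm ?_)
  simp only [Pi.div_apply]
  rw [Q_p hp x, Q_rpow hp x]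
  have hS2 : Real.sinh ((p - 1) / 2 * x) ^ 2 = Real.cosh ((p - 1) / 2 * x) ^ 2 - 1 := by
    have := Real.cosh_sq_sub_sinh_sq ((p - 1) / 2 * x); linarith
  have hp2 : p + 1 ≠ 0 := by linarith
  set C := Real.cosh ((p - 1) / 2 * x) with hCdef
  set S := Real.sinh ((p - 1) / 2 * x) with hSdef
  set q := Qgen p x with hqdef
  clear_value C S q
  field_simp
  linear_combination (-(q*(p+1))) * hS2

lemma deriv2Q_eq (hp : 1 < p) :
    deriv (deriv (Qgen p)) = fun x => Qgen p x - Qgen p x ^ p :=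
  funext fun x => (derivQ_hasDeriv hp x).deriv

lemma Q_hasDeriv' (hp : 1 < p) (x : ℝ) :
    HasDerivAt (Qgen p) (deriv (Qgen p) x) x :=
  (Q_hasDeriv hp x).deriv ▸ Q_hasDeriv hp x

lemma deriv2Q_hasDeriv (hp : 1 < p) (x : ℝ) :
    HasDerivAt (deriv (deriv (Qgen p)))
      (deriv (Qgen p) x - p * Qgen p x ^ (p - 1) * deriv (Qgen p) x) x := by
  rw [deriv2Q_eq hp]
  have hQ := Q_hasDeriv' hp x
  have hQp := hQ.rpow_const (p := p) (Or.inl (Q_pos hp x).ne')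
  refine (hQ.sub hQp).congr_deriv (Eq.symm ?_)
  ring

lemma energy (hp : 1 < p) (x : ℝ) :
    deriv (Qgen p) x ^ 2 = Qgen p x ^ 2 - 2 / (p + 1) * Qgen p x ^ (p + 1) := by
  rw [derivQ_eq hp, Q_p1 hp x, Q_rpow hp x]
  beta_reduce
  have hc := Real.cosh_pos ((p - 1) / 2 * x)
  have hS2 : Real.sinh ((p - 1) / 2 * x) ^ 2 = Real.cosh ((p - 1) / 2 * x) ^ 2 - 1 := by
    have := Real.cosh_sq_sub_sinh_sq ((p - 1) / 2 * x); linarith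
  have hp2 : p + 1 ≠ 0 := by linarith
  set C := Real.cosh ((p - 1) / 2 * x) with hCdef
  set S := Real.sinh ((p - 1) / 2 * x) with hSdef
  set q := Qgen p x with hqdef
  clear_value C S q
  field_simp
  linear_combination q ^ 2 * hS2

lemma QQp_hasDeriv (hp : 1 < p) (x : ℝ) :
    HasDerivAt (fun y => Qgen p y - Qgen p y ^ p)
      (deriv (Qgen p) x - p * Qgen p x ^ (p - 1) * deriv (Qgen p) x) x := by
  have h := (Q_hasDeriv' hp x).sub
    ((Q_hasDeriv' hp x).rpow_const (p := p) (Or.inl (Q_pos hp x).ne'))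
  refine h.congr_deriv (Eq.symm ?_)
  ring

lemma V0_hasDeriv {V₀ : ℝ → ℝ} (hp : 1 < p)
    (hV₀ : ∀ x : ℝ, V₀ x = -(1 / (p - 1)) * Qgen p x - 3 / 2 * x * deriv (Qgen p) x) (x : ℝ) :
    HasDerivAt V₀ (-(1 / (p - 1)) * deriv (Qgen p) x
      - 3 / 2 * (deriv (Qgen p) x + x * (Qgen p x - Qgen p x ^ p))) x := by
  rw [funext hV₀]
  have h := ((Q_hasDeriv' hp x).const_mul (-(1 / (p - 1)))).sub
    (((hasDerivAt_id x).mul (derivQ_hasDeriv hp x)).const_mul (3 / 2))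
  convert h using 1
  · rfl
  · rfl
  · funext y; simp only [Pi.sub_apply, Pi.mul_apply, id_eq]; ring
  · simp only [id_eq]; ring

lemma derivV0_eq {V₀ : ℝ → ℝ} (hp : 1 < p)
    (hV₀ : ∀ x : ℝ, V₀ x = -(1 / (p - 1)) * Qgen p x - 3 / 2 * x * deriv (Qgen p) x) :
    deriv V₀ = fun x => -(1 / (p - 1)) * deriv (Qgen p) x
      - 3 / 2 * (deriv (Qgen p) x + x * (Qgen p x - Qgen p x ^ p)) :=
  funext fun x => (V0_hasDeriv hp hV₀ x).deriv

lemma V0_hasDeriv2 {V₀ : ℝ → ℝ} (hp : 1 < p)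
    (hV₀ : ∀ x : ℝ, V₀ x = -(1 / (p - 1)) * Qgen p x - 3 / 2 * x * deriv (Qgen p) x) (x : ℝ) :
    HasDerivAt (deriv V₀) (-(1 / (p - 1)) * (Qgen p x - Qgen p x ^ p)
      - 3 / 2 * (2 * (Qgen p x - Qgen p x ^ p)
        + x * (deriv (Qgen p) x - p * Qgen p x ^ (p - 1) * deriv (Qgen p) x))) x := by
  rw [derivV0_eq hp hV₀]
  have h := ((derivQ_hasDeriv hp x).const_mul (-(1 / (p - 1)))).sub
    (((derivQ_hasDeriv hp x).add ((hasDerivAt_id x).mul (QQp_hasDeriv hp x))).const_mul (3 / 2))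
  refine h.congr_deriv (Eq.symm ?_)
  simp only [id_eq]; ring

noncomputable def Fant (p : ℝ) (x : ℝ) : ℝ :=
  (1 - 2 * p) / (p - 1) * (Qgen p x * deriv (Qgen p) x)
    + x * (-(9 / 4) * Qgen p x ^ 2 + 3 * p / (p + 1) * Qgen p x ^ (p + 1))

lemma key {V₀ Z₀ : ℝ → ℝ} (hp : 1 < p)
    (hV₀ : ∀ x : ℝ, V₀ x = -(1 / (p - 1)) * Qgen p x - 3 / 2 * x * deriv (Qgen p) x)
    (hZ₀ : ∀ x : ℝ, Z₀ x = 3 * deriv (deriv (Qgen p)) x + 3 * deriv (deriv V₀) x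
        + p * Qgen p x ^ (p - 1) * V₀ x) (x : ℝ) :
    HasDerivAt (Fant p)
      (Z₀ x * Qgen p x - (p - 5) / (4 * (p - 1)) * Qgen p x ^ 2) x := by
  have hQ := Q_hasDeriv' hp x
  have hR := derivQ_hasDeriv hp x
  have h1 := (hQ.mul hR).const_mul ((1 - 2 * p) / (p - 1))
  have h2 := ((hQ.pow 2).const_mul (-(9 / 4))).add
    ((hQ.rpow_const (p := p + 1) (Or.inl (Q_pos hp x).ne')).const_mul (3 * p / (p + 1)))
  have h3 := (hasDerivAt_id x).mul h2
  have h := h1.add h3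
  refine h.congr_deriv (Eq.symm ?_)
  simp only [id_eq, Pi.add_apply, Pi.pow_apply]
  push_cast
  rw [hZ₀ x, hV₀ x, deriv2Q_eq hp, (V0_hasDeriv2 hp hV₀ x).deriv,
    show p + 1 - 1 = p from by ring]
  have hE : deriv (Qgen p) x ^ 2
      = Qgen p x ^ 2 - 2 / (p + 1) * (Qgen p x ^ (p - 1) * Qgen p x ^ 2) := by
    rw [energy hp x, Q_p1 hp x]
  beta_reduce
  rw [Q_p hp x, Q_p1 hp x]
  have hp1 : p - 1 ≠ 0 := by linarith
  have hp2 : p + 1 ≠ 0 := by linarith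
  set s := Qgen p x ^ (p - 1) with hs
  set r := deriv (Qgen p) x with hr
  set q := Qgen p x with hq
  clear_value q r s
  have hE' : (p + 1) * r ^ 2 = (p + 1) * q ^ 2 - 2 * (s * q ^ 2) := by
    field_simp at hE; linarith
  field_simp
  linear_combination (8*(2*p-1)) * hE'

lemma exp_abs_le_cosh (t : ℝ) : Real.exp |t| / 2 ≤ Real.cosh t := by
  rw [Real.cosh_eq]
  rcases abs_cases t with ⟨h, _⟩ | ⟨h, _⟩ <;> rw [h] <;>
    nlinarith [Real.exp_pos t, Real.exp_pos (-t)]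

lemma Q_decay (hp : 1 < p) (x : ℝ) :
    Qgen p x ≤ (2 * (p + 1)) ^ (1 / (p - 1)) * Real.exp (-|x|) := by
  have hc := Real.cosh_pos ((p - 1) / 2 * x)
  have h1 := exp_abs_le_cosh ((p - 1) / 2 * x)
  have habs : |(p - 1) / 2 * x| = (p - 1) / 2 * |x| := by
    rw [abs_mul, abs_of_pos (by linarith : (0:ℝ) < (p - 1) / 2)]
  rw [habs] at h1
  have hexp : Real.exp ((p - 1) / 2 * |x|) ^ 2 = Real.exp ((p - 1) * |x|) := by
    rw [← Real.exp_nat_mul]; ring_nf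
  have h2 : Real.exp ((p - 1) * |x|) / 4 ≤ Real.cosh ((p - 1) / 2 * x) ^ 2 := by
    nlinarith [Real.exp_pos ((p - 1) / 2 * |x|), Real.exp_pos ((p - 1) * |x|)]
  have hbase : (p + 1) / (2 * Real.cosh ((p - 1) / 2 * x) ^ 2)
      ≤ 2 * (p + 1) * Real.exp (-((p - 1) * |x|)) := by
    have hEpos := Real.exp_pos ((p - 1) * |x|)
    rw [Real.exp_neg, div_le_iff₀ (mul_pos two_pos (pow_pos hc 2))]
    have hu : (Real.exp ((p - 1) * |x|))⁻¹ * Real.exp ((p - 1) * |x|) = 1 :=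
      inv_mul_cancel₀ hEpos.ne'
    nlinarith [mul_le_mul_of_nonneg_left h2
      (mul_nonneg (mul_nonneg (by norm_num : (0:ℝ) ≤ 4) (by linarith : (0:ℝ) ≤ p + 1))
        (inv_nonneg.mpr hEpos.le)), hu]
  have h3 := Real.rpow_le_rpow (base_pos hp x).le hbase (div_nonneg zero_le_one (by linarith) : (0:ℝ) ≤ 1 / (p - 1))
  rw [Qgen]
  refine h3.trans (le_of_eq ?_)
  rw [Real.mul_rpow (by linarith) (Real.exp_pos _).le]
  congr 1
  rw [← Real.exp_mul]
  congr 1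
  rw [mul_one_div, div_eq_iff (by linarith : p - 1 ≠ 0)]
  ring

lemma derivQ_abs_le (hp : 1 < p) (x : ℝ) : |deriv (Qgen p) x| ≤ Qgen p x := by
  rw [derivQ_eq hp]
  beta_reduce
  have hc := Real.cosh_pos ((p - 1) / 2 * x)
  rw [abs_neg, abs_mul, abs_of_pos (Q_pos hp x), abs_div, abs_of_pos hc]
  refine mul_le_of_le_one_right (Q_pos hp x).le ?_
  rw [div_le_one hc, Real.abs_sinh, ← Real.cosh_abs]
  exact (Real.sinh_lt_cosh _).le

lemma s_le (hp : 1 < p) (x : ℝ) : Qgen p x ^ (p - 1) ≤ (p + 1) / 2 := by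
  rw [Q_rpow hp x]
  have h := Real.one_le_cosh ((p - 1) / 2 * x)
  have hc := Real.cosh_pos ((p - 1) / 2 * x)
  rw [div_le_div_iff₀ (by positivity) (by norm_num)]
  have h2 : 1 ≤ Real.cosh ((p - 1) / 2 * x) ^ 2 := by nlinarith
  nlinarith

lemma xE_le (x : ℝ) : |x| * Real.exp (-|x|) ≤ 1 := by
  rw [Real.exp_neg, mul_comm, inv_mul_le_iff₀ (Real.exp_pos _)]
  have := Real.add_one_le_exp |x|
  nlinarith [abs_nonneg x]

lemma E_le_one (x : ℝ) : Real.exp (-|x|) ≤ 1 := by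
  rw [← Real.exp_zero]
  exact Real.exp_le_exp.mpr (neg_nonpos.mpr (abs_nonneg x))

lemma Z0Q_eq {V₀ Z₀ : ℝ → ℝ} (hp : 1 < p)
    (hV₀ : ∀ x : ℝ, V₀ x = -(1 / (p - 1)) * Qgen p x - 3 / 2 * x * deriv (Qgen p) x)
    (hZ₀ : ∀ x : ℝ, Z₀ x = 3 * deriv (deriv (Qgen p)) x + 3 * deriv (deriv V₀) x
        + p * Qgen p x ^ (p - 1) * V₀ x) (x : ℝ) :
    Z₀ x * Qgen p x =
      (-6 - 3 / (p - 1)) * Qgen p x ^ 2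
      + (6 + (3 - p) / (p - 1)) * (Qgen p x ^ (p - 1) * Qgen p x ^ 2)
      + (-(9 / 2)) * (x * (Qgen p x * deriv (Qgen p) x))
      + 3 * p * (x * (Qgen p x * (Qgen p x ^ (p - 1) * deriv (Qgen p) x))) := by
  rw [hZ₀ x, hV₀ x, deriv2Q_eq hp, (V0_hasDeriv2 hp hV₀ x).deriv]
  beta_reduce
  rw [Q_p hp x]
  have hp1 : p - 1 ≠ 0 := by linarith
  field_simp
  ring

lemma comb_core {CQ q r s x E S : ℝ}
    (hq0 : 0 ≤ q) (hqE : q ≤ CQ * E) (hr : |r| ≤ q) (hs0 : 0 ≤ s) (hsS : s ≤ S)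
    (hE0 : 0 < E) (hE1 : E ≤ 1) (hxE : |x| * E ≤ 1) (hCQ : 0 ≤ CQ) :
    q ^ 2 ≤ CQ ^ 2 * E ∧ |x| * q ^ 2 ≤ CQ ^ 2 * E ∧ s * q ^ 2 ≤ S * (CQ ^ 2 * E)
      ∧ |x| * (s * q ^ 2) ≤ S * (CQ ^ 2 * E) := by
  have hS : 0 ≤ S := hs0.trans hsS
  have hq2E2 : q ^ 2 ≤ CQ ^ 2 * E ^ 2 := by
    nlinarith [mul_le_mul hqE hqE hq0 (mul_nonneg hCQ hE0.le)]
  have hq2 : q ^ 2 ≤ CQ ^ 2 * E := by nlinarith [sq_nonneg CQ]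
  have hxq2 : |x| * q ^ 2 ≤ CQ ^ 2 * E := by
    have h2 : |x| * q ^ 2 ≤ |x| * (CQ ^ 2 * E ^ 2) :=
      mul_le_mul_of_nonneg_left hq2E2 (abs_nonneg x)
    nlinarith [mul_le_mul_of_nonneg_right hxE (mul_nonneg (sq_nonneg CQ) hE0.le)]
  refine ⟨hq2, hxq2, ?_, ?_⟩
  · exact mul_le_mul hsS hq2 (sq_nonneg q) hS
  · have := mul_le_mul hsS hxq2 (mul_nonneg (abs_nonneg x) (sq_nonneg q)) hS
    nlinarith [this]

lemma Z0Q_bound {V₀ Z₀ : ℝ → ℝ} (hp : 1 < p)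
    (hV₀ : ∀ x : ℝ, V₀ x = -(1 / (p - 1)) * Qgen p x - 3 / 2 * x * deriv (Qgen p) x)
    (hZ₀ : ∀ x : ℝ, Z₀ x = 3 * deriv (deriv (Qgen p)) x + 3 * deriv (deriv V₀) x
        + p * Qgen p x ^ (p - 1) * V₀ x) (x : ℝ) :
    |Z₀ x * Qgen p x| ≤
      ((|(-6 - 3 / (p - 1))| + |6 + (3 - p) / (p - 1)| * ((p + 1) / 2) + 9 / 2
        + 3 * p * ((p + 1) / 2)) * ((2 * (p + 1)) ^ (1 / (p - 1))) ^ 2) * Real.exp (-|x|) := by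
  set CQ := (2 * (p + 1)) ^ (1 / (p - 1) : ℝ) with hCQdef
  have hCQ : 0 ≤ CQ := Real.rpow_nonneg (by linarith) _
  set E := Real.exp (-|x|) with hEdef
  obtain ⟨h1, h2, h3, h4⟩ := comb_core (Q_pos hp x).le (Q_decay hp x) (derivQ_abs_le hp x)
    (Real.rpow_nonneg (Q_pos hp x).le (p - 1)) (s_le hp x) (Real.exp_pos _) (E_le_one x)
    (xE_le x) hCQ
  rw [Z0Q_eq hp hV₀ hZ₀ x]
  set q := Qgen p x with hq
  set r := deriv (Qgen p) x with hr
  set s := Qgen p x ^ (p - 1) with hs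
  have hq0 : 0 ≤ q := (Q_pos hp x).le
  have hs0 : 0 ≤ s := Real.rpow_nonneg (Q_pos hp x).le (p - 1)
  have habs_r : |r| ≤ q := derivQ_abs_le hp x
  have hqr : |q * r| ≤ q ^ 2 := by
    rw [abs_mul, abs_of_nonneg hq0]; nlinarith [abs_nonneg r]
  have hqsr : |q * (s * r)| ≤ s * q ^ 2 := by
    rw [abs_mul, abs_mul, abs_of_nonneg hq0, abs_of_nonneg hs0]
    nlinarith [abs_nonneg r, mul_le_mul_of_nonneg_left habs_r (mul_nonneg hq0 hs0)]
  have hT1 : |(-6 - 3 / (p - 1)) * q ^ 2| ≤ |(-6 - 3 / (p - 1))| * (CQ ^ 2 * E) := by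
    rw [abs_mul, abs_of_nonneg (sq_nonneg q)]
    exact mul_le_mul_of_nonneg_left h1 (abs_nonneg _)
  have hT2 : |(6 + (3 - p) / (p - 1)) * (s * q ^ 2)|
      ≤ |6 + (3 - p) / (p - 1)| * ((p + 1) / 2 * (CQ ^ 2 * E)) := by
    rw [abs_mul, abs_of_nonneg (mul_nonneg (Real.rpow_nonneg (Q_pos hp x).le (p - 1)) (sq_nonneg q))]
    exact mul_le_mul_of_nonneg_left h3 (abs_nonneg _)
  have hT3 : |(-(9 / 2)) * (x * (q * r))| ≤ 9 / 2 * (CQ ^ 2 * E) := by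
    rw [abs_mul, abs_mul]
    have : |x| * |q * r| ≤ |x| * q ^ 2 := mul_le_mul_of_nonneg_left hqr (abs_nonneg x)
    have h92 : |(-(9 / 2) : ℝ)| = 9 / 2 := by norm_num
    rw [h92]
    nlinarith [abs_nonneg x, this, h2]
  have hT4 : |3 * p * (x * (q * (s * r)))| ≤ 3 * p * ((p + 1) / 2 * (CQ ^ 2 * E)) := by
    have h3p : |(3 * p : ℝ)| = 3 * p := abs_of_pos (by linarith)
    rw [abs_mul, h3p, abs_mul]
    have ha : |x| * |q * (s * r)| ≤ |x| * (s * q ^ 2) :=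
      mul_le_mul_of_nonneg_left hqsr (abs_nonneg x)
    nlinarith [ha, h4, abs_nonneg x]
  calc |(-6 - 3 / (p - 1)) * q ^ 2 + (6 + (3 - p) / (p - 1)) * (s * q ^ 2)
        + (-(9 / 2)) * (x * (q * r)) + 3 * p * (x * (q * (s * r)))|
      ≤ |(-6 - 3 / (p - 1)) * q ^ 2 + (6 + (3 - p) / (p - 1)) * (s * q ^ 2)
        + (-(9 / 2)) * (x * (q * r))| + |3 * p * (x * (q * (s * r)))| := abs_add_le _ _
    _ ≤ |(-6 - 3 / (p - 1)) * q ^ 2 + (6 + (3 - p) / (p - 1)) * (s * q ^ 2)|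
        + |(-(9 / 2)) * (x * (q * r))| + |3 * p * (x * (q * (s * r)))| := by
        gcongr; exact abs_add_le _ _
    _ ≤ |(-6 - 3 / (p - 1)) * q ^ 2| + |(6 + (3 - p) / (p - 1)) * (s * q ^ 2)|
        + |(-(9 / 2)) * (x * (q * r))| + |3 * p * (x * (q * (s * r)))| := by
        gcongr; exact abs_add_le _ _
    _ ≤ _ := by linarith [hT1, hT2, hT3, hT4]

lemma Fant_bound (hp : 1 < p) (x : ℝ) :
    |Fant p x| ≤ ((|(1 - 2 * p) / (p - 1)| + 9 / 4 + 3 * p / (p + 1) * ((p + 1) / 2))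
      * ((2 * (p + 1)) ^ (1 / (p - 1))) ^ 2) * Real.exp (-|x|) := by
  have hFx : Fant p x = (1 - 2 * p) / (p - 1) * (Qgen p x * deriv (Qgen p) x)
      + x * (-(9 / 4) * Qgen p x ^ 2 + 3 * p / (p + 1) * (Qgen p x ^ (p - 1) * Qgen p x ^ 2)) := by
    rw [Fant, Q_p1 hp x]
  rw [hFx]
  set CQ := (2 * (p + 1)) ^ (1 / (p - 1) : ℝ) with hCQdef
  have hCQ : 0 ≤ CQ := Real.rpow_nonneg (by linarith) _
  set E := Real.exp (-|x|) with hEdef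
  obtain ⟨h1, h2, h3, h4⟩ := comb_core (Q_pos hp x).le (Q_decay hp x) (derivQ_abs_le hp x)
    (Real.rpow_nonneg (Q_pos hp x).le (p - 1)) (s_le hp x) (Real.exp_pos _) (E_le_one x)
    (xE_le x) hCQ
  set q := Qgen p x with hq
  set r := deriv (Qgen p) x with hr
  set s := Qgen p x ^ (p - 1) with hs
  have hq0 : 0 ≤ q := (Q_pos hp x).le
  have hs0 : 0 ≤ s := Real.rpow_nonneg (Q_pos hp x).le (p - 1)
  have habs_r : |r| ≤ q := derivQ_abs_le hp x
  have hc2 : (0:ℝ) ≤ 3 * p / (p + 1) := by positivity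
  have hT1 : |(1 - 2 * p) / (p - 1) * (q * r)| ≤ |(1 - 2 * p) / (p - 1)| * (CQ ^ 2 * E) := by
    rw [abs_mul]
    have hqr : |q * r| ≤ q ^ 2 := by
      rw [abs_mul, abs_of_nonneg hq0]; nlinarith [abs_nonneg r]
    have := mul_le_mul_of_nonneg_left (hqr.trans h1) (abs_nonneg ((1 - 2 * p) / (p - 1)))
    linarith
  have hT2 : |x * (-(9 / 4) * q ^ 2 + 3 * p / (p + 1) * (s * q ^ 2))|
      ≤ 9 / 4 * (CQ ^ 2 * E) + 3 * p / (p + 1) * ((p + 1) / 2 * (CQ ^ 2 * E)) := by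
    rw [abs_mul]
    have hin : |(-(9 / 4) * q ^ 2 + 3 * p / (p + 1) * (s * q ^ 2))|
        ≤ 9 / 4 * q ^ 2 + 3 * p / (p + 1) * (s * q ^ 2) := by
      refine (abs_add_le _ _).trans ?_
      rw [abs_mul, abs_mul, abs_of_nonneg (sq_nonneg q),
        abs_of_nonneg (mul_nonneg hs0 (sq_nonneg q)), abs_of_nonneg hc2]
      have : |(-(9 / 4) : ℝ)| = 9 / 4 := by norm_num
      rw [this]
    have hstep : |x| * |(-(9 / 4) * q ^ 2 + 3 * p / (p + 1) * (s * q ^ 2))|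
        ≤ |x| * (9 / 4 * q ^ 2 + 3 * p / (p + 1) * (s * q ^ 2)) :=
      mul_le_mul_of_nonneg_left hin (abs_nonneg x)
    have hexp : |x| * (9 / 4 * q ^ 2 + 3 * p / (p + 1) * (s * q ^ 2))
        = 9 / 4 * (|x| * q ^ 2) + 3 * p / (p + 1) * (|x| * (s * q ^ 2)) := by ring
    rw [hexp] at hstep
    have hb1 := mul_le_mul_of_nonneg_left h2 (by norm_num : (0:ℝ) ≤ 9 / 4)
    have hb2 := mul_le_mul_of_nonneg_left h4 hc2
    linarith
  calc |(1 - 2 * p) / (p - 1) * (q * r)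
        + x * (-(9 / 4) * q ^ 2 + 3 * p / (p + 1) * (s * q ^ 2))|
      ≤ |(1 - 2 * p) / (p - 1) * (q * r)|
        + |x * (-(9 / 4) * q ^ 2 + 3 * p / (p + 1) * (s * q ^ 2))| := abs_add_le _ _
    _ ≤ _ := by linarith [hT1, hT2]

lemma continuous_Q (hp : 1 < p) : Continuous (Qgen p) := by
  apply Continuous.rpow_const
  · exact continuous_const.div
      (continuous_const.mul ((Real.continuous_cosh.comp (continuous_const.mul continuous_id)).pow 2))
      (fun x => by positivity)
  · exact fun x => Or.inl (ne_of_gt (base_pos hp x))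

lemma continuous_derivQ (hp : 1 < p) : Continuous (deriv (Qgen p)) := by
  rw [derivQ_eq hp]
  exact ((continuous_Q hp).mul
    ((Real.continuous_sinh.comp (continuous_const.mul continuous_id)).div
      (Real.continuous_cosh.comp (continuous_const.mul continuous_id))
      (fun x => (Real.cosh_pos _).ne'))).neg

lemma continuous_s (hp : 1 < p) : Continuous (fun x => Qgen p x ^ (p - 1)) := by
  have : (fun x => Qgen p x ^ (p - 1))
      = fun x => (p + 1) / (2 * Real.cosh ((p - 1) / 2 * x) ^ 2) := funext fun x => Q_rpow hp x
  rw [this]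
  exact continuous_const.div
    (continuous_const.mul ((Real.continuous_cosh.comp (continuous_const.mul continuous_id)).pow 2))
    (fun x => by positivity)

lemma integrable_exp_neg_abs : Integrable (fun x : ℝ => Real.exp (-|x|)) := by
  have h1 : IntegrableOn (fun x : ℝ => Real.exp (-|x|)) (Set.Ioi 0) := by
    refine ((exp_neg_integrableOn_Ioi 0 one_pos).congr_fun (fun x hx => ?_) measurableSet_Ioi)
    rw [abs_of_pos hx]; ring_nf
  have h2 : IntegrableOn (fun x : ℝ => Real.exp (-|x|)) (Set.Iic 0) := by
    have A : MeasurableEmbedding fun x : ℝ => -x :=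
      (Homeomorph.neg ℝ).isClosedEmbedding.measurableEmbedding
    have key := (A.integrableOn_map_iff (f := fun x : ℝ => Real.exp (-|x|)) (s := Set.Iic 0)
      (μ := volume))
    rw [Measure.map_neg_eq_self (volume : Measure ℝ)] at key
    rw [key]
    have hpre : ((fun x : ℝ => -x) ⁻¹' Set.Iic 0) = Set.Ici 0 := by ext y; simp
    rw [hpre]
    refine h1.congr_set_ae (Filter.EventuallyEq.symm Ioi_ae_eq_Ici) |>.congr_fun
      (fun x hx => ?_) measurableSet_Ici
    simp [abs_neg]
  rw [← integrableOn_univ, ← Set.Iic_union_Ioi (a := (0:ℝ))]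
  exact h2.union h1

lemma tendsto_Kexp_top (K : ℝ) :
    Filter.Tendsto (fun x : ℝ => K * Real.exp (-|x|)) Filter.atTop (nhds 0) := by
  have h : Filter.Tendsto (fun x : ℝ => K * Real.exp (-x)) Filter.atTop (nhds (K * 0)) :=
    Real.tendsto_exp_neg_atTop_nhds_zero.const_mul K
  rw [mul_zero] at h
  refine h.congr' ?_
  filter_upwards [Filter.eventually_ge_atTop (0:ℝ)] with x hx
  rw [abs_of_nonneg hx]

lemma tendsto_Kexp_bot (K : ℝ) :
    Filter.Tendsto (fun x : ℝ => K * Real.exp (-|x|)) Filter.atBot (nhds 0) := by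
  have h : Filter.Tendsto (fun x : ℝ => K * Real.exp x) Filter.atBot (nhds (K * 0)) :=
    Real.tendsto_exp_atBot.const_mul K
  rw [mul_zero] at h
  refine h.congr' ?_
  filter_upwards [Filter.eventually_le_atBot (0:ℝ)] with x hx
  rw [abs_of_nonpos hx, neg_neg]

theorem Z0_Q_integral (p : ℝ) (hp : 1 < p) (V₀ Z₀ : ℝ → ℝ)
    (hV₀ : ∀ x : ℝ, V₀ x = -(1 / (p - 1)) * Qgen p x - 3 / 2 * x * deriv (Qgen p) x)
    (hZ₀ : ∀ x : ℝ, Z₀ x = 3 * deriv (deriv (Qgen p)) x + 3 * deriv (deriv V₀) x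
        + p * Qgen p x ^ (p - 1) * V₀ x) :
    (∫ x : ℝ, Z₀ x * Qgen p x) = (p - 5) / (4 * (p - 1)) * ∫ x : ℝ, Qgen p x ^ 2 ∧
    (p ≠ 5 → (∫ x : ℝ, Z₀ x * Qgen p x) ≠ 0) := by
  have hp1 : p - 1 ≠ 0 := by linarith
  set c := (p - 5) / (4 * (p - 1)) with hcdef
  -- integrability of Q^2
  have hQ2int : Integrable (fun x => Qgen p x ^ 2) := by
    set CQ := (2 * (p + 1)) ^ (1 / (p - 1) : ℝ) with hCQdef
    refine Integrable.mono' (integrable_exp_neg_abs.const_mul (CQ ^ 2))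
      (((continuous_Q hp).pow 2).aestronglyMeasurable) (Filter.Eventually.of_forall fun x => ?_)
    have hCQ : 0 ≤ CQ := Real.rpow_nonneg (by linarith) _
    obtain ⟨h1, -, -, -⟩ := comb_core (Q_pos hp x).le (Q_decay hp x) (derivQ_abs_le hp x)
      (Real.rpow_nonneg (Q_pos hp x).le (p - 1)) (s_le hp x) (Real.exp_pos _) (E_le_one x)
      (xE_le x) hCQ
    rw [Real.norm_eq_abs, abs_of_nonneg (sq_nonneg _)]
    exact h1
  -- integrability of Z₀ * Q
  have hmeas : AEStronglyMeasurable (fun x => Z₀ x * Qgen p x) volume := by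
    have heq : (fun x => Z₀ x * Qgen p x) = fun x =>
        (-6 - 3 / (p - 1)) * Qgen p x ^ 2
        + (6 + (3 - p) / (p - 1)) * (Qgen p x ^ (p - 1) * Qgen p x ^ 2)
        + (-(9 / 2)) * (x * (Qgen p x * deriv (Qgen p) x))
        + 3 * p * (x * (Qgen p x * (Qgen p x ^ (p - 1) * deriv (Qgen p) x))) :=
      funext (Z0Q_eq hp hV₀ hZ₀)
    rw [heq]
    apply Continuous.aestronglyMeasurable
    have hq := continuous_Q hp
    have hr := continuous_derivQ hp
    have hs := continuous_s hp
    continuity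
  have hZint : Integrable (fun x => Z₀ x * Qgen p x) := by
    refine Integrable.mono' (integrable_exp_neg_abs.const_mul
      ((|(-6 - 3 / (p - 1))| + |6 + (3 - p) / (p - 1)| * ((p + 1) / 2) + 9 / 2
        + 3 * p * ((p + 1) / 2)) * ((2 * (p + 1)) ^ (1 / (p - 1))) ^ 2)) hmeas
      (Filter.Eventually.of_forall fun x => ?_)
    rw [Real.norm_eq_abs]
    exact Z0Q_bound hp hV₀ hZ₀ x
  -- FTC on ℝ
  have hsub : Integrable (fun x => Z₀ x * Qgen p x - c * Qgen p x ^ 2) :=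
    hZint.sub (hQ2int.const_mul c)
  have htop : Filter.Tendsto (Fant p) Filter.atTop (nhds 0) :=
    squeeze_zero_norm (fun x => by rw [Real.norm_eq_abs]; exact Fant_bound hp x)
      (tendsto_Kexp_top _)
  have hbot : Filter.Tendsto (Fant p) Filter.atBot (nhds 0) :=
    squeeze_zero_norm (fun x => by rw [Real.norm_eq_abs]; exact Fant_bound hp x)
      (tendsto_Kexp_bot _)
  have h0 : (∫ x : ℝ, (Z₀ x * Qgen p x - c * Qgen p x ^ 2)) = 0 - 0 :=
    integral_of_hasDerivAt_of_tendsto (key hp hV₀ hZ₀) hsub hbot htop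
  rw [integral_sub hZint (hQ2int.const_mul c), integral_const_mul, sub_zero] at h0
  have hmain : (∫ x : ℝ, Z₀ x * Qgen p x) = c * ∫ x : ℝ, Qgen p x ^ 2 := by
    have := sub_eq_zero.mp h0
    linarith [this]
  refine ⟨hmain, fun hp5 => ?_⟩
  have hIpos : 0 < ∫ x : ℝ, Qgen p x ^ 2 := by
    refine (integral_pos_iff_support_of_nonneg (fun x => sq_nonneg _) hQ2int).mpr ?_
    have hsupp : Function.support (fun x => Qgen p x ^ 2) = Set.univ := by
      ext x
      simp only [Function.mem_support, Set.mem_univ, iff_true]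
      exact (pow_pos (Q_pos hp x) 2).ne'
    rw [hsupp]
    simp [Real.volume_univ]
  have hc0 : c ≠ 0 := div_ne_zero (sub_ne_zero.mpr hp5)
    (ne_of_gt (by linarith : (0:ℝ) < 4 * (p - 1)))
  rw [hmain]
  exact mul_ne_zero hc0 hIpos.ne'
end
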